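/- Let γ₁, γ₂ ∈ ℂ be the two roots of the quadratic equation γ² − b γ − σ² = 0, where b ∈ ℂ and σ ∈ ℂ with Re(σ) ≠ 0. If |b| < 2|Re(σ)|, then one root has strictly negative real part and the other has strictly positive real part. -/

import Mathlib

lemma key_stmt3 (u v D E sr si : ℝ)
    (h1 : D^2 - E^2 = u^2 - v^2 + 4*sr^2 - 4*si^2)
    (h2 : D*E = u*v + 4*sr*si)
    (h3 : u^2 + v^2 < 4*sr^2)
    (h4 : D^2 ≤ u^2) : False := by
  have hz : (D^2+E^2+u^2+v^2)^2 = 16*(sr^2+si^2)^2 + 4*(D*u+E*v)^2 := by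
    linear_combination (D^2-E^2-u^2+v^2+4*sr^2-4*si^2) * h1 + (4*D*E-4*u*v+16*sr*si) * h2
  have tri : 4*sr^2 + 4*si^2 ≤ D^2+E^2+u^2+v^2 := by
    nlinarith [sq_nonneg (D*u+E*v), sq_nonneg (D^2+E^2+u^2+v^2+4*sr^2+4*si^2), sq_nonneg D, sq_nonneg E, sq_nonneg u, sq_nonneg v, sq_nonneg sr, sq_nonneg si]
  linarith

/-- If `γ₁, γ₂` are the two roots of `γ² − bγ − σ² = 0` with `Re σ ≠ 0` and `|b| < 2|Re σ|`,
then one root has strictly negative real part and the other strictly positive real part. -/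
theorem stmt3 (b σ γ₁ γ₂ : ℂ) (hσ : σ.re ≠ 0)
    (hroots : ∀ γ : ℂ, γ ^ 2 - b * γ - σ ^ 2 = (γ - γ₁) * (γ - γ₂))
    (hb : ‖b‖ < 2 * |σ.re|) :
    (γ₁.re < 0 ∧ 0 < γ₂.re) ∨ (γ₂.re < 0 ∧ 0 < γ₁.re) := by
  have hsum : γ₁ + γ₂ = b := by linear_combination hroots 1 - hroots 0
  have hprod : γ₁ * γ₂ = -σ^2 := by linear_combination -hroots 0
  have e1 : γ₁.re * γ₂.re - γ₁.im * γ₂.im = σ.im^2 - σ.re^2 := by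
    have h := congrArg Complex.re hprod
    simp [Complex.mul_re, pow_two] at h
    linarith
  have e2 : γ₁.re * γ₂.im + γ₁.im * γ₂.re = -(2*σ.re*σ.im) := by
    have h := congrArg Complex.im hprod
    simp [Complex.mul_im, pow_two] at h
    linarith
  have s1 : γ₁.re + γ₂.re = b.re := by
    have h := congrArg Complex.re hsum; simpa using h
  have s2 : γ₁.im + γ₂.im = b.im := by
    have h := congrArg Complex.im hsum; simpa using h
  have habs : b.re^2 + b.im^2 < 4*σ.re^2 := by
    have hsq := Complex.sq_norm b
    rw [Complex.normSq_apply] at hsq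
    nlinarith [norm_nonneg b, sq_abs σ.re, abs_nonneg σ.re]
  have hx : γ₁.re * γ₂.re < 0 := by
    by_contra hc
    push_neg at hc
    refine key_stmt3 b.re b.im (γ₁.re - γ₂.re) (γ₁.im - γ₂.im) σ.re σ.im ?_ ?_ habs ?_
    · linear_combination (-4)*e1 + (γ₁.re+γ₂.re+b.re)*s1 - (γ₁.im+γ₂.im+b.im)*s2
    · linear_combination (-2)*e2 + (γ₁.im+γ₂.im)*s1 + b.re*s2
    · rw [← s1]; nlinarith [hc]
  rcases mul_neg_iff.mp hx with ⟨h1, h2⟩ | ⟨h1, h2⟩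
  · exact Or.inr ⟨h2, h1⟩
  · exact Or.inl ⟨h1, h2⟩
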